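/- Let a₁, a₂ ∈ SL(2,ℂ) with traces t₁, t₂ such that t₁t₂ ≠ 0. Then the commutator a₁a₂a₁⁻¹a₂⁻¹ equals -p (where p = [[1,1],[0,1]]) if and only if there exist α, β ∈ ℂ with a₁ = k_{t₁}(α), a₂⁻¹ = k_{t₂}(β), and t₁⁻¹t₂(α² + 1) + t₁t₂⁻¹(β² + 1) = 2αβ + t₂α - t₁β. -/

import Mathlib

open Matrix

noncomputable def kMat (t α : ℂ) : Matrix (Fin 2) (Fin 2) ℂ :=
  !![α + t / 2, (t ^ 2 / 4 - 1 - α ^ 2) / (2 * t); 2 * t, -α + t / 2]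

private lemma ext2 {a b c d w x y z : ℂ} (h1 : a = w) (h2 : b = x) (h3 : c = y) (h4 : d = z) :
    !![a, b; c, d] = !![w, x; y, z] := by rw [h1, h2, h3, h4]

private lemma forward_core (a b c d e f g h : ℂ) (ht1 : a + d ≠ 0) (ht2 : e + h ≠ 0)
    (had : a * d - b * c = 1) (hd2 : e * h - f * g = 1)
    (hE1 : a * e + b * g + (e * a + f * c + g * a + h * c) = 0)
    (hE2 : a * f + b * h + (e * b + f * d + g * b + h * d) = 0)
    (hE3 : c * e + d * g + (g * a + h * c) = 0)
    (hE4 : c * f + d * h + (g * b + h * d) = 0) :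
    c = 2 * (a + d) ∧ g = -2 * (e + h) ∧ f * (a + d) - b * (e + h) + d * h = 0 := by
  have hc : c = 2 * (a + d) := by
    have key : (a * e - d * h) * (2 * (a + d) - c) = 0 := by
      linear_combination (a + d) * (hE1 - hE4) - a * hE3
    rcases mul_eq_zero.mp key with hdeg | hck
    swap
    · linear_combination -hck
    · by_contra hcne
      have hcne' : 2 * (a + d) - c ≠ 0 := fun hz => hcne (by linear_combination -hz)
      have hB : f * (a+d)^2 + b * (a+d) * (e+h) - (a*d-1) * (e+h) + d*h*(a+d) = 0 := by
        linear_combination (a+d) * hE2 - b * hE3 - (e+h) * had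
      have hD : f * c * (a+d) - (a*d-1) * (e+h) + 2*d*h*(a+d) = 0 := by
        linear_combination (a+d) * (hE4 - hE2) + hB
      have hStar : ((a*d-1) - 2*b*(a+d)) * ((a*d-1)*(e+h) - d*h*(a+d)) = 0 := by
        linear_combination b*(a+d)*hD - (a*d-1)*hB + f*(a+d)^2*had
      have hStar3 : (a*d-1) * (((a*d-1)*(e+h) - d*h*(a+d)) * (c - 2*(a+d))) = 0 := by
        linear_combination c*hStar - 2*(a+d)*((a*d-1)*(e+h) - d*h*(a+d))*had
      rcases mul_eq_zero.mp hStar3 with hu | hP3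
      · have hbdh : b*d*h*((a+d)*(a+d)) = 0 := by
          linear_combination (1/2 : ℂ)*hStar
            - (1/2 : ℂ)*((a*d-1)*(e+h) - d*h*(a+d) - 2*b*(a+d)*(e+h))*hu
        have hbdh2 : b*d*h = 0 :=
          (mul_eq_zero.mp hbdh).resolve_right (mul_ne_zero ht1 ht1)
        have hd0 : d ≠ 0 := fun hz => by rw [hz] at hu; norm_num at hu
        have ha0 : a ≠ 0 := fun hz => by rw [hz] at hu; norm_num at hu
        have hdh : d * h = 0 := by
          rcases mul_eq_zero.mp hbdh2 with hbd | hh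
          · rcases mul_eq_zero.mp hbd with hb | hd'
            · have hfT : (a+d) * (f*(a+d) + d*h) = 0 := by
                linear_combination hB + (e+h)*hu - ((a+d)*(e+h))*hb
              have hf : f*(a+d) + d*h = 0 := by
                rcases mul_eq_zero.mp hfT with h' | h'
                · exact absurd h' ht1
                · exact h'
              have : d*h*(2*(a+d) - c) = 0 := by
                linear_combination hD - c*hf + (e+h)*hu
              rcases mul_eq_zero.mp this with h' | h'
              · exact h'
              · exact absurd h' hcne'
            · exact absurd hd' hd0
          · exact mul_eq_zero_of_right d hh
        have hh0 : h = 0 := by rcases mul_eq_zero.mp hdh with h'|h'; exact absurd h' hd0; exact h'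
        have he0 : e = 0 := by
          have : a * e = 0 := by linear_combination hdeg + d*hh0
          rcases mul_eq_zero.mp this with h'|h'; exact absurd h' ha0; exact h'
        exact ht2 (by rw [he0, hh0]; ring)
      · rcases mul_eq_zero.mp hP3 with hP | hck
        swap
        · exact hcne' (by linear_combination -hck)
        have hD : f * c * (a+d) - (a*d-1) * (e+h) + 2*d*h*(a+d) = 0 := by
          have hB : f * (a+d)^2 + b * (a+d) * (e+h) - (a*d-1) * (e+h) + d*h*(a+d) = 0 := by
            linear_combination (a+d) * hE2 - b * hE3 - (e+h) * had
          linear_combination (a+d) * (hE4 - hE2) + hB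
        have hE' : (a+d)^2*(e*h) + (a*d-1)*(e+h)^2 - 2*d*h*(a+d)*(e+h) - (a+d)^2 = 0 := by
          linear_combination (a+d)^2 * hd2 + f*(a+d)*hE3 - (e+h)*hD
        have hFT : (a+d) * ((a+d)*(e*h) - d*h*(e+h) - (a+d)) = 0 := by
          linear_combination hE' - (e+h)*hP
        have hF : (a+d)*(e*h) - d*h*(e+h) - (a+d) = 0 := by
          rcases mul_eq_zero.mp hFT with h'|h'; exact absurd h' ht1; exact h'
        have hHT : (a+d) * (a*d + e*h - 1) = 0 := by
          linear_combination -(a*d-1)*hF - d*h*hP + (a+d)*d*h*hdeg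
        have hH : a*d + e*h - 1 = 0 := by
          rcases mul_eq_zero.mp hHT with h'|h'; exact absurd h' ht1; exact h'
        have hhe : h * (e*(e+h) + d*(a+d)) = 0 := by
          linear_combination (e+h)*hH - hP
        rcases mul_eq_zero.mp hhe with hh0 | hq
        · exact ht1 (by linear_combination -hF + (e*(a+d) - d*(e+h))*hh0)
        · exact ht1 (by linear_combination a*(hq - hH) - e*hdeg - d*hH)
  have hg : g = -2 * (e + h) := by
    have hT : (a+d) * (g + 2*(e+h)) = 0 := by linear_combination hE3 - (e+h)*hc
    have := (mul_eq_zero.mp hT).resolve_left ht1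
    linear_combination this
  refine ⟨hc, hg, ?_⟩
  linear_combination (1/2 : ℂ)*hE4 - (f/2)*hc - (b/2)*hg

set_option maxHeartbeats 1000000 in
theorem commutator_neg_parabolic_iff (a₁ a₂ : Matrix (Fin 2) (Fin 2) ℂ) (t₁ t₂ : ℂ)
    (ha₁ : a₁.det = 1) (ha₂ : a₂.det = 1) (ht₁ : a₁.trace = t₁) (ht₂ : a₂.trace = t₂)
    (ht : t₁ * t₂ ≠ 0) :
    a₁ * a₂ * a₁⁻¹ * a₂⁻¹ = -!![1, 1; 0, 1] ↔
      ∃ α β : ℂ, a₁ = kMat t₁ α ∧ a₂⁻¹ = kMat t₂ β ∧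
        t₁⁻¹ * t₂ * (α ^ 2 + 1) + t₁ * t₂⁻¹ * (β ^ 2 + 1) =
          2 * α * β + t₂ * α - t₁ * β := by
  have ht1 : t₁ ≠ 0 := left_ne_zero_of_mul ht
  have ht2 : t₂ ≠ 0 := right_ne_zero_of_mul ht
  have hu₁ : IsUnit a₁.det := by rw [ha₁]; exact isUnit_one
  have hu₂ : IsUnit a₂.det := by rw [ha₂]; exact isUnit_one
  have hiff : a₁ * a₂ * a₁⁻¹ * a₂⁻¹ = -!![1, 1; 0, 1] ↔
      a₁ * a₂ = -!![1, 1; 0, 1] * (a₂ * a₁) := by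
    constructor
    · intro hcomm
      have h2 := congrArg (· * (a₂ * a₁)) hcomm
      simp only [Matrix.mul_assoc] at h2 ⊢
      rwa [Matrix.nonsing_inv_mul_cancel_left _ _ hu₂, Matrix.nonsing_inv_mul _ hu₁,
        Matrix.mul_one] at h2
    · intro hmul
      have h2 := congrArg (· * (a₁⁻¹ * a₂⁻¹)) hmul
      simp only [Matrix.mul_assoc] at h2 ⊢
      rwa [Matrix.mul_nonsing_inv_cancel_left _ _ hu₁, Matrix.mul_nonsing_inv _ hu₂,
        Matrix.mul_one] at h2
  have htr1 : a₁ 0 0 + a₁ 1 1 = t₁ := by rw [← ht₁, Matrix.trace_fin_two]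
  have htr2 : a₂ 0 0 + a₂ 1 1 = t₂ := by rw [← ht₂, Matrix.trace_fin_two]
  have hdet1 : a₁ 0 0 * a₁ 1 1 - a₁ 0 1 * a₁ 1 0 = 1 := by rw [← ha₁, Matrix.det_fin_two]
  have hdet2 : a₂ 0 0 * a₂ 1 1 - a₂ 0 1 * a₂ 1 0 = 1 := by rw [← ha₂, Matrix.det_fin_two]
  have hainv : a₂⁻¹ = !![a₂ 1 1, -a₂ 0 1; -a₂ 1 0, a₂ 0 0] := by
    rw [Matrix.inv_def, ha₂, Matrix.adjugate_fin_two]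
    simp
  have ht1' : a₁ 0 0 + a₁ 1 1 ≠ 0 := by rw [htr1]; exact ht1
  have ht2' : a₂ 0 0 + a₂ 1 1 ≠ 0 := by rw [htr2]; exact ht2
  rw [hiff]
  constructor
  · intro hmul
    rw [Matrix.eta_fin_two a₁, Matrix.eta_fin_two a₂] at hmul
    rw [show (-!![1, 1; 0, 1] : Matrix (Fin 2) (Fin 2) ℂ) = !![-1,-1;0,-1] by norm_num,
      Matrix.mul_fin_two, Matrix.mul_fin_two, Matrix.mul_fin_two] at hmul
    rw [← Matrix.ext_iff] at hmul
    simp [Fin.forall_fin_two] at hmul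
    obtain ⟨⟨h1, h2⟩, h3, h4⟩ := hmul
    obtain ⟨hc, hg, hsc⟩ := forward_core (a₁ 0 0) (a₁ 0 1) (a₁ 1 0) (a₁ 1 1)
      (a₂ 0 0) (a₂ 0 1) (a₂ 1 0) (a₂ 1 1) ht1' ht2' hdet1 hdet2
      (by linear_combination h1) (by linear_combination h2)
      (by linear_combination h3) (by linear_combination h4)
    refine ⟨(a₁ 0 0 - a₁ 1 1) / 2, (a₂ 1 1 - a₂ 0 0) / 2, ?_, ?_, ?_⟩
    · rw [Matrix.eta_fin_two a₁]
      unfold kMat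
      refine ext2 ?_ ?_ ?_ ?_
      all_goals try simp only [Matrix.cons_val', Matrix.cons_val_zero, Matrix.cons_val_one,
        Matrix.head_cons, Matrix.empty_val', Matrix.cons_val_fin_one, Matrix.head_fin_const,
        Matrix.of_apply]
      · linear_combination (1/2 : ℂ) * htr1
      · rw [eq_div_iff (mul_ne_zero two_ne_zero ht1)]
        linear_combination -hdet1 - (a₁ 0 1)*hc +
          ((1/4 : ℂ)*t₁ - 2*(a₁ 0 1) + (1/4 : ℂ)*(a₁ 0 0) + (1/4 : ℂ)*(a₁ 1 1)) * htr1
      · linear_combination hc + 2*htr1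
      · linear_combination (1/2 : ℂ) * htr1
    · rw [hainv]
      unfold kMat
      refine ext2 ?_ ?_ ?_ ?_
      all_goals try simp only [Matrix.cons_val', Matrix.cons_val_zero, Matrix.cons_val_one,
        Matrix.head_cons, Matrix.empty_val', Matrix.cons_val_fin_one, Matrix.head_fin_const,
        Matrix.of_apply]
      · linear_combination (1/2 : ℂ) * htr2
      · rw [eq_div_iff (mul_ne_zero two_ne_zero ht2)]
        linear_combination -hdet2 - (a₂ 0 1)*hg +
          ((1/4 : ℂ)*t₂ + 2*(a₂ 0 1) + (1/4 : ℂ)*(a₂ 0 0) + (1/4 : ℂ)*(a₂ 1 1)) * htr2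
      · linear_combination -hg + 2*htr2
      · linear_combination (1/2 : ℂ) * htr2
    · set a := a₁ 0 0; set b := a₁ 0 1; set c := a₁ 1 0; set d := a₁ 1 1
      set e := a₂ 0 0; set f := a₂ 0 1; set g := a₂ 1 0; set h := a₂ 1 1
      have hm : t₂^2*(((a - d)/2)^2 + 1) + t₁^2*(((h - e)/2)^2 + 1) =
          t₁*t₂*(2*((a - d)/2)*((h - e)/2) + t₂*((a - d)/2) - t₁*((h - e)/2)) := by
        linear_combination 2*(a+d)*(e+h)*hsc - (e+h)^2*hdet1 - (a+d)^2*hdet2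
          - b*(e+h)^2*hc - f*(a+d)^2*hg
          + (-(1/4 : ℂ)*t₁*(e - h)^2 - t₁ + (1/2 : ℂ)*(e - h)*t₁*t₂ + d*(e - h)*t₂
            + (1/2 : ℂ)*(a - d)*t₂^2 - (1/4 : ℂ)*(a + d)*(e - h)^2 - (a + d)) * htr1
          + ((1/4 : ℂ)*a^2*t₂ + (1/2 : ℂ)*a*d*t₂ - (3/4 : ℂ)*d^2*t₂ - t₂
            - (1/2 : ℂ)*a*d*h - (7/4 : ℂ)*d^2*h + (3/2 : ℂ)*a*d*e + (1/4 : ℂ)*d^2*e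
            + (1/4 : ℂ)*a^2*e + (1/4 : ℂ)*a^2*h - e - h) * htr2
      field_simp
      linear_combination (4 : ℂ)*hm
  · rintro ⟨α, β, ha1k, ha2k, heq⟩
    have hprod : kMat t₂ β * !![-β + t₂/2, -((t₂^2/4 - 1 - β^2)/(2*t₂)); -(2*t₂), β + t₂/2]
        = 1 := by
      unfold kMat
      rw [Matrix.mul_fin_two, show (1 : Matrix (Fin 2) (Fin 2) ℂ) = !![1,0;0,1] from
        Matrix.one_fin_two]
      refine ext2 ?_ ?_ ?_ ?_ <;> field_simp <;> ring
    have ha2 : a₂ = !![-β + t₂/2, -((t₂^2/4 - 1 - β^2)/(2*t₂)); -(2*t₂), β + t₂/2] := by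
      rw [← Matrix.nonsing_inv_nonsing_inv a₂ hu₂, ha2k, Matrix.inv_eq_right_inv hprod]
    have hsc : (-((t₂^2/4 - 1 - β^2)/(2*t₂)))*t₁ - ((t₁^2/4 - 1 - α^2)/(2*t₁))*t₂
        + (-α + t₁/2)*(β + t₂/2) = 0 := by
      field_simp at heq ⊢
      linear_combination (8 : ℂ) * heq
    rw [ha1k, ha2]
    unfold kMat
    rw [show (-!![1, 1; 0, 1] : Matrix (Fin 2) (Fin 2) ℂ) = !![-1,-1;0,-1] by norm_num,
      Matrix.mul_fin_two, Matrix.mul_fin_two, Matrix.mul_fin_two]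
    refine ext2 ?_ ?_ ?_ ?_
    all_goals try simp only [Matrix.cons_val', Matrix.cons_val_zero, Matrix.cons_val_one,
      Matrix.head_cons, Matrix.empty_val', Matrix.cons_val_fin_one, Matrix.head_fin_const,
      Matrix.of_apply]
    · linear_combination 2*hsc
    · linear_combination hsc
    · linear_combination (0 : ℂ)
    · linear_combination 2*hsc
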